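/- With F_n defined by the contour integral, for integers n > 0 and x > n, one has F_n(x, n) = 0. -/

import Mathlib

open Complex

/-- `Fker q m x t` is `F_m(x,t) = (1/2πi) ∮ dw w^{-m} (1+w)^{m-x-1} (1+(1-q)w)^t`,
with the contour a circle around 0 of radius in (1, 1/(1-q)), enclosing 0 and -1
but not the pole at -1/(1-q). -/
noncomputable def Fker (q : ℝ) (m x t : ℤ) : ℂ :=
  (2 * Real.pi * Complex.I)⁻¹ *
    ∮ w in C(0, (1 + (1 - q)⁻¹) / 2),
      w ^ (-m) * (1 + w) ^ (m - x - 1) * (1 + (1 - (q : ℂ)) * w) ^ t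

theorem F_pos_vanishes (q : ℝ) (hq0 : 0 < q) (hq1 : q < 1) (n x : ℤ) (hn : 0 < n)
    (hx : n < x) : Fker q n x n = 0 := by
  have hq : (0:ℝ) < 1 - q := by linarith
  set f : ℂ → ℂ := fun w => w ^ (-n) * (1 + w) ^ (n - x - 1) * (1 + (1 - (q : ℂ)) * w) ^ n
    with hfdef
  set r : ℝ := (1 + (1 - q)⁻¹) / 2 with hrdef
  have h1r : 1 < r := by
    have h1 : 1 < (1 - q)⁻¹ := (one_lt_inv₀ hq).mpr (by linarith)
    rw [hrdef]; linarith
  -- differentiability away from 0 and -1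
  have hdiff : ∀ z : ℂ, z ≠ 0 → z ≠ -1 → DifferentiableAt ℂ f z := by
    intro z hz0 hz1
    have h1z : (1 : ℂ) + z ≠ 0 := by
      intro h
      exact hz1 (by linear_combination h)
    apply DifferentiableAt.mul
    apply DifferentiableAt.mul
    · exact differentiableAt_zpow.mpr (Or.inl hz0)
    · exact ((differentiableAt_const _).add differentiableAt_id).zpow (Or.inl h1z)
    · exact ((differentiableAt_const _).add
        ((differentiableAt_const _).mul differentiableAt_id)).zpow (Or.inr hn.le)
  -- the integral does not depend on the radius (≥ r)
  have key : ∀ R : ℝ, r ≤ R → (∮ w in C(0, R), f w) = ∮ w in C(0, r), f w := by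
    intro R hR
    have hmem : ∀ z : ℂ, z ∉ Metric.ball (0:ℂ) r → z ≠ 0 ∧ z ≠ -1 := by
      intro z hz
      rw [Metric.mem_ball, Complex.dist_eq, sub_zero, not_lt] at hz
      constructor
      · intro h; rw [h] at hz; simp at hz; linarith
      · intro h; rw [h] at hz; simp at hz; linarith
    apply circleIntegral_eq_of_differentiable_on_annulus_off_countable (by linarith) hR
      Set.countable_empty
    · intro z hz
      exact ((hdiff z (hmem z hz.2).1 (hmem z hz.2).2).continuousAt).continuousWithinAt
    · intro z hz
      have hb : z ∉ Metric.ball (0:ℂ) r := fun h => hz.1.2 (Metric.ball_subset_closedBall h)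
      exact hdiff z (hmem z hb).1 (hmem z hb).2
  -- natural number versions of the exponents
  obtain ⟨m, hm⟩ : ∃ m : ℕ, (m : ℤ) = n := ⟨n.toNat, Int.toNat_of_nonneg hn.le⟩
  obtain ⟨k, hk⟩ : ∃ k : ℕ, (k : ℤ) = x + 1 - n :=
    ⟨(x + 1 - n).toNat, Int.toNat_of_nonneg (by omega)⟩
  have hk2 : 2 ≤ k := by omega
  -- norm bound on large circles
  have hbound : ∀ R : ℝ, 2 ≤ R →
      ‖∮ w in C(0, R), f w‖ ≤ 2 * Real.pi * 2 ^ (m + 1) * (R - 1)⁻¹ := by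
    intro R hR
    have hR0 : (0:ℝ) < R := by linarith
    have hR1 : (1:ℝ) ≤ R - 1 := by linarith
    have hCb : ∀ z ∈ Metric.sphere (0:ℂ) R, ‖f z‖ ≤ 2 ^ m * ((R - 1) ^ 2)⁻¹ := by
      intro z hz
      rw [Metric.mem_sphere, Complex.dist_eq, sub_zero] at hz
      have hz' : ‖z‖ = R := hz
      have hz1 : R - 1 ≤ ‖1 + z‖ := by
        have h := norm_add_le (1 + z) (-1)
        have h2 : (1 + z) + (-1) = z := by ring
        rw [h2] at h
        simp only [norm_neg, norm_one] at h
        have : ‖z‖ = R := hz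
        linarith
      have hz2 : ‖1 + (1 - (q:ℂ)) * z‖ ≤ 2 * R := by
        have h := norm_add_le (1:ℂ) ((1 - (q:ℂ)) * z)
        have hc : ‖(1 - (q:ℂ))‖ = 1 - q := by
          rw [show (1 - (q:ℂ)) = ((1 - q : ℝ) : ℂ) by push_cast; ring]
          rw [Complex.norm_real, Real.norm_eq_abs, abs_of_pos hq]
        rw [norm_mul, hc, hz'] at h
        simp only [norm_one] at h
        nlinarith
      have hexp1 : -n = -(m:ℤ) := by omega
      have hexp2 : n - x - 1 = -(k:ℤ) := by omega
      have hexp3 : n = (m:ℤ) := hm.symm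
      calc ‖f z‖ = ‖z‖ ^ (-n) * ‖1 + z‖ ^ (n - x - 1) * ‖1 + (1 - (q:ℂ)) * z‖ ^ n := by
            simp [hfdef, norm_mul, norm_zpow]
        _ = (R ^ m)⁻¹ * (‖1 + z‖ ^ k)⁻¹ * ‖1 + (1 - (q:ℂ)) * z‖ ^ m := by
            rw [hexp1, hexp2, hexp3, hz', zpow_neg, zpow_neg, zpow_natCast, zpow_natCast,
              zpow_natCast]
        _ ≤ (R ^ m)⁻¹ * ((R - 1) ^ 2)⁻¹ * (2 * R) ^ m := by
            gcongr
            calc (R - 1) ^ 2 ≤ (R - 1) ^ k := pow_le_pow_right₀ hR1 hk2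
              _ ≤ ‖1 + z‖ ^ k := pow_le_pow_left₀ (by linarith) hz1 k
        _ = 2 ^ m * ((R - 1) ^ 2)⁻¹ := by
            rw [mul_pow]
            field_simp
    have h := circleIntegral.norm_integral_le_of_norm_le_const (f := f) (c := 0)
      hR0.le hCb
    refine h.trans ?_
    have hfrac : R * ((R - 1) ^ 2)⁻¹ ≤ 2 * (R - 1)⁻¹ := by
      rw [← div_eq_mul_inv, ← div_eq_mul_inv, div_le_div_iff₀ (by positivity) (by linarith)]
      nlinarith
    calc 2 * Real.pi * R * (2 ^ m * ((R - 1) ^ 2)⁻¹)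
        = 2 * Real.pi * 2 ^ m * (R * ((R - 1) ^ 2)⁻¹) := by ring
      _ ≤ 2 * Real.pi * 2 ^ m * (2 * (R - 1)⁻¹) := by
          gcongr
      _ = 2 * Real.pi * 2 ^ (m + 1) * (R - 1)⁻¹ := by ring
  -- the integral at radius r is zero
  have hzero : (∮ w in C(0, r), f w) = 0 := by
    have htendsto : Filter.Tendsto (fun R : ℝ => ∮ w in C(0, R), f w) Filter.atTop (nhds 0) := by
      rw [tendsto_zero_iff_norm_tendsto_zero]
      have hub : Filter.Tendsto (fun R : ℝ => 2 * Real.pi * 2 ^ (m + 1) * (R - 1)⁻¹)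
          Filter.atTop (nhds 0) := by
        have h1 : Filter.Tendsto (fun R : ℝ => (R - 1)⁻¹) Filter.atTop (nhds 0) := by
          apply Filter.Tendsto.comp tendsto_inv_atTop_zero
          exact Filter.tendsto_atTop_add_const_right _ (-1) Filter.tendsto_id
        have := h1.const_mul (2 * Real.pi * 2 ^ (m + 1))
        simpa using this
      apply tendsto_of_tendsto_of_tendsto_of_le_of_le' tendsto_const_nhds hub
      · exact Filter.Eventually.of_forall fun R => norm_nonneg _
      · filter_upwards [Filter.eventually_ge_atTop (2:ℝ)] with R hR using hbound R hR
    have hconst : (fun R : ℝ => ∮ w in C(0, R), f w) =ᶠ[Filter.atTop]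
        fun _ => ∮ w in C(0, r), f w := by
      filter_upwards [Filter.eventually_ge_atTop r] with R hR using key R hR
    have := htendsto.congr' hconst
    exact (tendsto_nhds_unique this tendsto_const_nhds).symm
  unfold Fker
  rw [show (∮ w in C(0, (1 + (1 - q)⁻¹) / 2),
      w ^ (-n) * (1 + w) ^ (n - x - 1) * (1 + (1 - (q : ℂ)) * w) ^ n) = 0 from hzero, mul_zero]
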